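/- On the elliptic curve E_t: ζ²η = σ(tη² + ((t−3)²−12)/4·ση + σ²), the point P₅ = (t : t(t−1)/2 : 1) satisfies 2·P₅ = P₃ where P₃ = (1 : (t−1)/2 : 1); consequently P₅ has order dividing 6. -/

import Mathlib

open WeierstrassCurve

/-- The sunset elliptic curve `ζ²η = σ(tη² + ((t−3)²−12)/4·ση + σ²)` in the affine
chart `η = 1`, i.e. `y² = x³ + ((t−3)²−12)/4·x² + t·x`. -/
noncomputable def sunsetCurve (t : ℝ) : WeierstrassCurve.Affine ℝ :=
  { a₁ := 0, a₂ := ((t - 3) ^ 2 - 12) / 4, a₃ := 0, a₄ := t, a₆ := 0 }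

/-- The point `P₃ = (1, (t−1)/2)` lies on the sunset curve. -/
theorem sunset_P3_equation (t : ℝ) : (sunsetCurve t).Equation 1 ((t - 1) / 2) := by
  simp only [sunsetCurve, WeierstrassCurve.Affine.equation_iff]; ring

/-- The point `P₅ = (t, t(t−1)/2)` lies on the sunset curve. -/
theorem sunset_P5_equation (t : ℝ) : (sunsetCurve t).Equation t (t * (t - 1) / 2) := by
  simp only [sunsetCurve, WeierstrassCurve.Affine.equation_iff]; ring

private lemma some_eq_some {W : WeierstrassCurve.Affine ℝ} {x₁ y₁ x₂ y₂ : ℝ}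
    (h₁ : W.Nonsingular x₁ y₁) (h₂ : W.Nonsingular x₂ y₂) (hx : x₁ = x₂) (hy : y₁ = y₂) :
    WeierstrassCurve.Affine.Point.some _ _ h₁ = WeierstrassCurve.Affine.Point.some _ _ h₂ := by
  subst hx hy; rfl

theorem sunset_P5_six_torsion (t : ℝ) (hΔ : (sunsetCurve t).Δ ≠ 0) :
    (2 : ℤ) • (WeierstrassCurve.Affine.Point.some _ _
        ((WeierstrassCurve.Affine.equation_iff_nonsingular_of_Δ_ne_zero (W := sunsetCurve t) hΔ).mp (sunset_P5_equation t)))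
      = WeierstrassCurve.Affine.Point.some _ _
        ((WeierstrassCurve.Affine.equation_iff_nonsingular_of_Δ_ne_zero (W := sunsetCurve t) hΔ).mp (sunset_P3_equation t))
    ∧ (6 : ℤ) • (WeierstrassCurve.Affine.Point.some _ _
        ((WeierstrassCurve.Affine.equation_iff_nonsingular_of_Δ_ne_zero (W := sunsetCurve t) hΔ).mp (sunset_P5_equation t)))
      = (0 : (sunsetCurve t).Point) := by
  have hΔfac : (sunsetCurve t).Δ = t ^ 2 * (t - 9) * (t - 1) ^ 3 := by
    simp only [sunsetCurve, WeierstrassCurve.Δ, WeierstrassCurve.b₂, WeierstrassCurve.b₄,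
      WeierstrassCurve.b₆, WeierstrassCurve.b₈]
    ring
  rw [hΔfac] at hΔ
  have ht0 : t ≠ 0 := fun h => hΔ (by rw [h]; ring)
  have ht1 : t - 1 ≠ 0 := fun h => hΔ (by rw [sub_eq_zero] at h; rw [h]; ring)
  set W := sunsetCurve t
  set h₅ := (WeierstrassCurve.Affine.equation_iff_nonsingular_of_Δ_ne_zero (W := W) (hΔfac ▸ hΔ)).mp (sunset_P5_equation t) with h₅_def
  set h₃ := (WeierstrassCurve.Affine.equation_iff_nonsingular_of_Δ_ne_zero (W := W) (hΔfac ▸ hΔ)).mp (sunset_P3_equation t) with h₃_def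
  have hneg5 : W.negY t (t * (t - 1) / 2) = -(t * (t - 1) / 2) := by
    simp [WeierstrassCurve.Affine.negY, W, sunsetCurve]
  have hneg3 : W.negY 1 ((t - 1) / 2) = -((t - 1) / 2) := by
    simp [WeierstrassCurve.Affine.negY, W, sunsetCurve]
  have hy5 : t * (t - 1) / 2 ≠ W.negY t (t * (t - 1) / 2) := by
    rw [hneg5]
    intro h
    have : t * (t - 1) = 0 := by linarith
    rcases mul_eq_zero.mp this with h' | h' <;> [exact ht0 h'; exact ht1 h']
  have hy3 : (t - 1) / 2 ≠ W.negY 1 ((t - 1) / 2) := by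
    rw [hneg3]
    intro h
    exact ht1 (by linarith)
  have hslope5 : W.slope t t (t * (t - 1) / 2) (t * (t - 1) / 2) = (t + 1) / 2 := by
    rw [WeierstrassCurve.Affine.slope_of_Y_ne rfl hy5, hneg5]
    have h2y : t * (t - 1) / 2 - -(t * (t - 1) / 2) = t * (t - 1) := by ring
    rw [h2y]
    show (3 * t ^ 2 + 2 * (((t - 3) ^ 2 - 12) / 4) * t + t - 0 * (t * (t - 1) / 2)) /
      (t * (t - 1)) = (t + 1) / 2
    field_simp
    ring
  have hslope3 : W.slope 1 1 ((t - 1) / 2) ((t - 1) / 2) = (t - 3) / 2 := by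
    rw [WeierstrassCurve.Affine.slope_of_Y_ne rfl hy3, hneg3]
    have h2y : (t - 1) / 2 - -((t - 1) / 2) = t - 1 := by ring
    rw [h2y]
    show (3 * 1 ^ 2 + 2 * (((t - 3) ^ 2 - 12) / 4) * 1 + t - 0 * ((t - 1) / 2)) / (t - 1)
      = (t - 3) / 2
    field_simp
    ring
  have hX5 : W.addX t t (W.slope t t (t * (t - 1) / 2) (t * (t - 1) / 2)) = 1 := by
    rw [hslope5]
    show ((t + 1) / 2) ^ 2 + 0 * ((t + 1) / 2) - ((t - 3) ^ 2 - 12) / 4 - t - t = 1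
    ring
  have hY5 : W.addY t t (t * (t - 1) / 2) (W.slope t t (t * (t - 1) / 2) (t * (t - 1) / 2))
      = (t - 1) / 2 := by
    rw [WeierstrassCurve.Affine.addY, WeierstrassCurve.Affine.negAddY, hX5, hslope5]
    show -((t + 1) / 2 * (1 - t) + t * (t - 1) / 2) - 0 * 1 - 0 = (t - 1) / 2
    ring
  have h2smul : (2 : ℤ) • (WeierstrassCurve.Affine.Point.some _ _ h₅)
      = WeierstrassCurve.Affine.Point.some _ _ h₃ := by
    rw [two_zsmul, WeierstrassCurve.Affine.Point.add_self_of_Y_ne hy5]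
    exact some_eq_some _ _ hX5 hY5
  refine ⟨h2smul, ?_⟩
  -- now 2 • P₃ = -P₃
  have hX3 : W.addX 1 1 (W.slope 1 1 ((t - 1) / 2) ((t - 1) / 2)) = 1 := by
    rw [hslope3]
    show ((t - 3) / 2) ^ 2 + 0 * ((t - 3) / 2) - ((t - 3) ^ 2 - 12) / 4 - 1 - 1 = 1
    ring
  have hY3 : W.addY 1 1 ((t - 1) / 2) (W.slope 1 1 ((t - 1) / 2) ((t - 1) / 2))
      = -((t - 1) / 2) := by
    rw [WeierstrassCurve.Affine.addY, WeierstrassCurve.Affine.negAddY, hX3, hslope3]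
    show -((t - 3) / 2 * (1 - 1) + (t - 1) / 2) - 0 * 1 - 0 = -((t - 1) / 2)
    ring
  have h2P3 : (2 : ℤ) • (WeierstrassCurve.Affine.Point.some _ _ h₃)
      = -(WeierstrassCurve.Affine.Point.some _ _ h₃) := by
    rw [two_zsmul, WeierstrassCurve.Affine.Point.add_self_of_Y_ne hy3,
      WeierstrassCurve.Affine.Point.neg_some]
    exact some_eq_some _ _ hX3 (hY3.trans hneg3.symm)
  have h3P3 : (3 : ℤ) • (WeierstrassCurve.Affine.Point.some _ _ h₃) = 0 := by
    have : (3 : ℤ) • (WeierstrassCurve.Affine.Point.some _ _ h₃)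
        = (2 : ℤ) • (WeierstrassCurve.Affine.Point.some _ _ h₃)
          + WeierstrassCurve.Affine.Point.some _ _ h₃ := by
      rw [show (3 : ℤ) = 2 + 1 by norm_num, add_zsmul, one_zsmul]
    rw [this, h2P3, neg_add_cancel]
  calc (6 : ℤ) • (WeierstrassCurve.Affine.Point.some _ _ h₅)
      = (3 : ℤ) • ((2 : ℤ) • (WeierstrassCurve.Affine.Point.some _ _ h₅)) := by
        rw [← mul_zsmul]; norm_num
    _ = 0 := by rw [h2smul, h3P3]
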